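/- Let d ≥ 2, k > 2, θ ≥ 0, and let b₃(x,y) = |x|^θ φ(y) with φ : [−1/2,1/2] → [0,∞) measurable and essentially bounded, and ‖b₃‖ := ∫_{S^{2d−1}} b₃(ê·ω, ω₁·ω₂) dω < ∞. Suppose λ ∈ [0, ‖b₃‖] satisfies ∫_{S^{2d−1}} b₃(û·ω, ω₁·ω₂)(⟨v*⟩^k + ⟨v₁*⟩^k + ⟨v₂*⟩^k) dω ≤ λ (⟨v⟩² + ⟨v₁⟩² + ⟨v₂⟩²)^{k/2} for all v, v₁, v₂ ∈ ℝ^d with u = (v₁−v, v₂−v) ≠ 0, where û = u/|u|. Define K(v,v₁,v₂) = ∫_{S^{2d−1}} b₃(û·ω, ω₁·ω₂)(⟨v*⟩^k + ⟨v₁*⟩^k + ⟨v₂*⟩^k − ⟨v⟩^k − ⟨v₁⟩^k − ⟨v₂⟩^k) dω. Then there exists a constant C_k > 1, depending only on k, and functions G̃, L̃ defined on triples (v,v₁,v₂) with u ≠ 0, such that K = G̃ − L̃, 0 ≤ G̃ ≤ λ C_k (⟨v⟩⟨v₁⟩ + ⟨v⟩⟨v₂⟩ + ⟨v₁⟩⟨v₂⟩)(⟨v⟩^{k−2}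 + ⟨v₁⟩^{k−2} + ⟨v₂⟩^{k−2}), and L̃ ≥ (‖b₃‖ − λ)(⟨v⟩^k + ⟨v₁⟩^k + ⟨v₂⟩^k). -/

import Mathlib

open MeasureTheory
open scoped RealInnerProductSpace

/-- The "Japanese bracket" `⟨v⟩ = √(1 + |v|²)`. -/
noncomputable def jap {d : ℕ} (v : EuclideanSpace ℝ (Fin d)) : ℝ := Real.sqrt (1 + ‖v‖ ^ 2)

/-- The pair `(x, y) ∈ ℝ^d × ℝ^d` viewed as a vector of `ℝ^{2d}` (with the Euclidean norm). -/
noncomputable def pairE {d : ℕ} (x y : EuclideanSpace ℝ (Fin d)) :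
    EuclideanSpace ℝ (Fin d ⊕ Fin d) :=
  (EuclideanSpace.equiv (Fin d ⊕ Fin d) ℝ).symm (Sum.elim (fun i => x i) (fun i => y i))

/-- First component `ω₁ ∈ ℝ^d` of a vector `ω ∈ ℝ^{2d}`. -/
noncomputable def projL {d : ℕ} (z : EuclideanSpace ℝ (Fin d ⊕ Fin d)) :
    EuclideanSpace ℝ (Fin d) :=
  (EuclideanSpace.equiv (Fin d) ℝ).symm (fun i => z (Sum.inl i))

/-- Second component `ω₂ ∈ ℝ^d` of a vector `ω ∈ ℝ^{2d}`. -/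
noncomputable def projR {d : ℕ} (z : EuclideanSpace ℝ (Fin d ⊕ Fin d)) :
    EuclideanSpace ℝ (Fin d) :=
  (EuclideanSpace.equiv (Fin d) ℝ).symm (fun i => z (Sum.inr i))

/-- Scalar coefficient `c = ((v₁−v)·ω₁ + (v₂−v)·ω₂)/(1 + ω₁·ω₂)` of the ternary collision law. -/
noncomputable def tCoef {d : ℕ} (v v₁ v₂ ω₁ ω₂ : EuclideanSpace ℝ (Fin d)) : ℝ :=
  (⟪v₁ - v, ω₁⟫ + ⟪v₂ - v, ω₂⟫) / (1 + ⟪ω₁, ω₂⟫)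

/-- `v* = v + c(ω₁+ω₂)`. -/
noncomputable def vStar {d : ℕ} (v v₁ v₂ ω₁ ω₂ : EuclideanSpace ℝ (Fin d)) :
    EuclideanSpace ℝ (Fin d) := v + tCoef v v₁ v₂ ω₁ ω₂ • (ω₁ + ω₂)

/-- `v₁* = v₁ − c ω₁`. -/
noncomputable def v1Star {d : ℕ} (v v₁ v₂ ω₁ ω₂ : EuclideanSpace ℝ (Fin d)) :
    EuclideanSpace ℝ (Fin d) := v₁ - tCoef v v₁ v₂ ω₁ ω₂ • ω₁

/-- `v₂* = v₂ − c ω₂`. -/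
noncomputable def v2Star {d : ℕ} (v v₁ v₂ ω₁ ω₂ : EuclideanSpace ℝ (Fin d)) :
    EuclideanSpace ℝ (Fin d) := v₂ - tCoef v v₁ v₂ ω₁ ω₂ • ω₂

/-- The surface measure on the unit sphere `S^{2d−1} ⊂ ℝ^{2d}`. -/
noncomputable def sphereMeasure2 (d : ℕ) :
    Measure (Metric.sphere (0 : EuclideanSpace ℝ (Fin d ⊕ Fin d)) 1) :=
  (volume : Measure (EuclideanSpace ℝ (Fin d ⊕ Fin d))).toSphere

set_option maxHeartbeats 1000000

/- auxiliary lemmas -/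

lemma proj_norm_sq {d : ℕ} (z : EuclideanSpace ℝ (Fin d ⊕ Fin d)) :
    ‖projL z‖^2 + ‖projR z‖^2 = ‖z‖^2 := by
  rw [EuclideanSpace.norm_eq z, EuclideanSpace.norm_eq (projL z), EuclideanSpace.norm_eq (projR z)]
  rw [Real.sq_sqrt (by positivity), Real.sq_sqrt (by positivity), Real.sq_sqrt (by positivity)]
  rw [Fintype.sum_sum_type]
  rfl

lemma continuous_projL {d : ℕ} : Continuous (projL (d := d)) := by
  unfold projL
  exact (EuclideanSpace.equiv (Fin d) ℝ).symm.continuous.comp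
    (continuous_pi fun i => (continuous_apply (Sum.inl i)).comp
      (EuclideanSpace.equiv (Fin d ⊕ Fin d) ℝ).continuous)

lemma continuous_projR {d : ℕ} : Continuous (projR (d := d)) := by
  unfold projR
  exact (EuclideanSpace.equiv (Fin d) ℝ).symm.continuous.comp
    (continuous_pi fun i => (continuous_apply (Sum.inr i)).comp
      (EuclideanSpace.equiv (Fin d ⊕ Fin d) ℝ).continuous)

lemma one_le_jap {d : ℕ} (v : EuclideanSpace ℝ (Fin d)) : 1 ≤ jap v := by
  rw [jap]
  nlinarith [Real.sq_sqrt (show (0:ℝ) ≤ 1+‖v‖^2 by positivity),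
    Real.sqrt_nonneg (1+‖v‖^2), sq_nonneg ‖v‖]

lemma jap_nonneg {d : ℕ} (v : EuclideanSpace ℝ (Fin d)) : 0 ≤ jap v :=
  le_trans zero_le_one (one_le_jap v)

lemma jap_le {d : ℕ} {v : EuclideanSpace ℝ (Fin d)} {R : ℝ} (h : ‖v‖ ≤ R) :
    jap v ≤ Real.sqrt (1 + R^2) := by
  apply Real.sqrt_le_sqrt
  have : ‖v‖^2 ≤ R^2 := by nlinarith [norm_nonneg v]
  linarith

lemma continuous_jap {d : ℕ} : Continuous (jap (d := d)) :=
  Real.continuous_sqrt.comp (continuous_const.add (continuous_norm.pow 2))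

lemma chord_bound (p t : ℝ) (hp : 1 ≤ p) (ht0 : 0 ≤ t) (ht1 : t ≤ 1) :
    (1 + t) ^ p ≤ 1 + (2 ^ p - 1) * t := by
  have h := (convexOn_rpow hp).2 (Set.mem_Ici.mpr (by norm_num : (0:ℝ) ≤ 1))
    (Set.mem_Ici.mpr (by norm_num : (0:ℝ) ≤ 2)) (by linarith : (0:ℝ) ≤ 1 - t) ht0 (by ring)
  simp only [smul_eq_mul, mul_one] at h
  rw [show (1 - t + t * 2 : ℝ) = 1 + t by ring, Real.one_rpow] at h
  linarith

lemma key_bound (p x y : ℝ) (hp : 1 ≤ p) (hx : 0 ≤ x) (hy : 0 ≤ y) :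
    (x + y) ^ p ≤ x ^ p + 2 ^ p * y * (x ^ (p - 1) + y ^ (p - 1)) := by
  have hp0 : 0 < p := by linarith
  have h2p : (1:ℝ) ≤ 2 ^ p := Real.one_le_rpow (by norm_num) (by linarith)
  rcases le_or_gt y x with h | h
  · rcases eq_or_lt_of_le hx with rfl | hx0
    · have hy0 : y = 0 := le_antisymm (by linarith) hy
      subst hy0
      simp [Real.zero_rpow hp0.ne']
    · have ht0 : 0 ≤ y / x := by positivity
      have ht1 : y / x ≤ 1 := (div_le_one hx0).mpr h
      have h1 : x + y = x * (1 + y / x) := by field_simp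
      have hxp : (0:ℝ) ≤ x ^ p := Real.rpow_nonneg hx p
      have hxp1 : (0:ℝ) ≤ x ^ (p-1) := Real.rpow_nonneg hx _
      have hyp1 : (0:ℝ) ≤ y ^ (p-1) := Real.rpow_nonneg hy _
      calc (x + y) ^ p = x ^ p * (1 + y / x) ^ p := by
            rw [h1, Real.mul_rpow hx (by positivity)]
        _ ≤ x ^ p * (1 + (2 ^ p - 1) * (y / x)) := by
            exact mul_le_mul_of_nonneg_left (chord_bound p (y/x) hp ht0 ht1) hxp
        _ = x ^ p + (2 ^ p - 1) * y * x ^ (p - 1) := by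
            rw [Real.rpow_sub hx0, Real.rpow_one]
            field_simp
        _ ≤ x ^ p + 2 ^ p * y * (x ^ (p - 1) + y ^ (p - 1)) := by
            nlinarith [mul_nonneg hy hxp1, mul_nonneg (mul_nonneg (by linarith : (0:ℝ) ≤ 2^p) hy) hyp1]
  · have hy0 : 0 < y := lt_of_le_of_lt hx h
    have hxp : (0:ℝ) ≤ x ^ p := Real.rpow_nonneg hx p
    have hxp1 : (0:ℝ) ≤ x ^ (p-1) := Real.rpow_nonneg hx _
    have hyp1 : (0:ℝ) ≤ y ^ (p-1) := Real.rpow_nonneg hy _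
    calc (x + y) ^ p ≤ (2 * y) ^ p :=
          Real.rpow_le_rpow (by positivity) (by linarith) (by linarith)
      _ = 2 ^ p * (y ^ (p - 1) * y) := by
          rw [Real.mul_rpow (by norm_num) hy]
          congr 1
          rw [← Real.rpow_add_one hy0.ne' (p-1)]
          norm_num
      _ ≤ x ^ p + 2 ^ p * y * (x ^ (p - 1) + y ^ (p - 1)) := by
          nlinarith [hxp, mul_nonneg (mul_nonneg (by linarith : (0:ℝ) ≤ 2^p) hy) hxp1]

lemma povzner_aux (k : ℝ) (hk : 2 < k) (a b c : ℝ) (ha : 1 ≤ a) (hb : 1 ≤ b) (hc : 1 ≤ c)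
    (hba : b ≤ a) (hca : c ≤ a) :
    (a^2 + b^2 + c^2 : ℝ) ^ (k/2) ≤ (a^k + b^k + c^k) +
      (1 + 2^(k/2))^2 * ((a*b + a*c + b*c) * (a^(k-2) + b^(k-2) + c^(k-2))) := by
  have ha0 : (0:ℝ) ≤ a := by linarith
  have hb0 : (0:ℝ) ≤ b := by linarith
  have hc0 : (0:ℝ) ≤ c := by linarith
  have hp : 1 ≤ k / 2 := by linarith
  have e1 : ((a:ℝ)^2) ^ (k/2) = a ^ k := by
    rw [← Real.rpow_natCast a 2, ← Real.rpow_mul ha0]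
    congr 1
    push_cast
    ring
  have e2 : ((a:ℝ)^2) ^ (k/2 - 1) = a ^ (k-2) := by
    rw [← Real.rpow_natCast a 2, ← Real.rpow_mul ha0]
    congr 1
    push_cast
    ring
  have h := key_bound (k/2) (a^2) (b^2 + c^2) hp (by positivity) (by positivity)
  rw [e1, e2] at h
  have h' : (a^2 + b^2 + c^2 : ℝ) ^ (k/2) ≤ a ^ k +
      2^(k/2) * (b^2+c^2) * (a^(k-2) + (b^2+c^2)^(k/2-1)) := by
    rw [show (a^2 + b^2 + c^2 : ℝ) = a^2 + (b^2 + c^2) by ring]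
    exact h
  set P : ℝ := 2^(k/2) with hP
  have hP1 : (1:ℝ) ≤ P := Real.one_le_rpow (by norm_num) (by linarith)
  have hP0 : (0:ℝ) ≤ P := by linarith
  set Q : ℝ := a*b + a*c + b*c with hQ
  set T : ℝ := a^(k-2) + b^(k-2) + c^(k-2) with hT
  have hak2 : (0:ℝ) ≤ a^(k-2) := Real.rpow_nonneg ha0 _
  have hbk2 : (0:ℝ) ≤ b^(k-2) := Real.rpow_nonneg hb0 _
  have hck2 : (0:ℝ) ≤ c^(k-2) := Real.rpow_nonneg hc0 _
  have hT0 : (0:ℝ) ≤ T := by positivity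
  have hQ0 : (0:ℝ) ≤ Q := by positivity
  have hyQ : b^2 + c^2 ≤ Q := by nlinarith
  have e3 : (b^2+c^2 : ℝ)^(k/2-1) ≤ 2^(k/2-1) * a^(k-2) := by
    calc (b^2+c^2 : ℝ)^(k/2-1) ≤ (2*a^2)^(k/2-1) :=
          Real.rpow_le_rpow (by positivity) (by nlinarith) (by linarith)
      _ = 2^(k/2-1) * a^(k-2) := by
          rw [Real.mul_rpow (by norm_num) (by positivity), e2]
  have e4 : (2:ℝ)^(k/2-1) ≤ P := Real.rpow_le_rpow_of_exponent_le (by norm_num) (by linarith)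
  have e5 : (b^2+c^2 : ℝ)^(k/2-1) ≤ P * T := by
    calc (b^2+c^2 : ℝ)^(k/2-1) ≤ 2^(k/2-1) * a^(k-2) := e3
      _ ≤ P * T := by
          apply mul_le_mul e4 _ hak2 hP0
          rw [hT]; linarith
  have e6 : a^(k-2) + (b^2+c^2)^(k/2-1) ≤ (1 + P) * T := by
    have : a^(k-2) ≤ T := by rw [hT]; linarith
    nlinarith
  have hy0 : (0:ℝ) ≤ b^2 + c^2 := by positivity
  have step : P * (b^2+c^2) * (a^(k-2) + (b^2+c^2)^(k/2-1)) ≤ (1+P)^2 * (Q * T) := by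
    have h1 : P * (b^2+c^2) * (a^(k-2) + (b^2+c^2)^(k/2-1)) ≤ P * Q * ((1+P)*T) := by
      apply mul_le_mul (mul_le_mul_of_nonneg_left hyQ hP0) e6 (by positivity) (by positivity)
    have h2 : P*Q*((1+P)*T) ≤ (1+P)^2*(Q*T) := by
      nlinarith [mul_nonneg (by linarith : (0:ℝ) ≤ 1+P) (mul_nonneg hQ0 hT0)]
    exact h1.trans h2
  have hbk : (0:ℝ) ≤ b^k := Real.rpow_nonneg hb0 _
  have hck : (0:ℝ) ≤ c^k := Real.rpow_nonneg hc0 _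
  linarith

lemma povzner (k : ℝ) (hk : 2 < k) (a b c : ℝ) (ha : 1 ≤ a) (hb : 1 ≤ b) (hc : 1 ≤ c) :
    (a^2 + b^2 + c^2 : ℝ) ^ (k/2) ≤ (a^k + b^k + c^k) +
      (1 + 2^(k/2))^2 * ((a*b + a*c + b*c) * (a^(k-2) + b^(k-2) + c^(k-2))) := by
  rcases le_total b a with hba | hab
  · rcases le_total c a with hca | hac
    · exact povzner_aux k hk a b c ha hb hc hba hca
    · have h := povzner_aux k hk c a b hc ha hb hac (hba.trans hac)
      rw [show (a^2 + b^2 + c^2 : ℝ) = c^2 + a^2 + b^2 by ring]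
      calc (c^2 + a^2 + b^2 : ℝ) ^ (k/2) ≤ (c^k + a^k + b^k) +
            (1 + 2^(k/2))^2 * ((c*a + c*b + a*b) * (c^(k-2) + a^(k-2) + b^(k-2))) := h
        _ = (a^k + b^k + c^k) +
            (1 + 2^(k/2))^2 * ((a*b + a*c + b*c) * (a^(k-2) + b^(k-2) + c^(k-2))) := by ring
  · rcases le_total c b with hcb | hbc
    · have h := povzner_aux k hk b a c hb ha hc hab hcb
      rw [show (a^2 + b^2 + c^2 : ℝ) = b^2 + a^2 + c^2 by ring]
      calc (b^2 + a^2 + c^2 : ℝ) ^ (k/2) ≤ (b^k + a^k + c^k) +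
            (1 + 2^(k/2))^2 * ((b*a + b*c + a*c) * (b^(k-2) + a^(k-2) + c^(k-2))) := h
        _ = (a^k + b^k + c^k) +
            (1 + 2^(k/2))^2 * ((a*b + a*c + b*c) * (a^(k-2) + b^(k-2) + c^(k-2))) := by ring
    · have h := povzner_aux k hk c a b hc ha hb (hab.trans hbc) hbc
      rw [show (a^2 + b^2 + c^2 : ℝ) = c^2 + a^2 + b^2 by ring]
      calc (c^2 + a^2 + b^2 : ℝ) ^ (k/2) ≤ (c^k + a^k + b^k) +
            (1 + 2^(k/2))^2 * ((c*a + c*b + a*b) * (c^(k-2) + a^(k-2) + b^(k-2))) := h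
        _ = (a^k + b^k + c^k) +
            (1 + 2^(k/2))^2 * ((a*b + a*c + b*c) * (a^(k-2) + b^(k-2) + c^(k-2))) := by ring

/- sphere facts -/

lemma sphere_facts {d : ℕ} (ω : Metric.sphere (0 : EuclideanSpace ℝ (Fin d ⊕ Fin d)) 1) :
    ‖projL (ω : EuclideanSpace ℝ (Fin d ⊕ Fin d))‖ ≤ 1 ∧
    ‖projR (ω : EuclideanSpace ℝ (Fin d ⊕ Fin d))‖ ≤ 1 ∧
    1/2 ≤ 1 + ⟪projL (ω : EuclideanSpace ℝ (Fin d ⊕ Fin d)),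
      projR (ω : EuclideanSpace ℝ (Fin d ⊕ Fin d))⟫ ∧
    ⟪projL (ω : EuclideanSpace ℝ (Fin d ⊕ Fin d)),
      projR (ω : EuclideanSpace ℝ (Fin d ⊕ Fin d))⟫ ∈ Set.Icc (-(1:ℝ)/2) (1/2) := by
  set z := (ω : EuclideanSpace ℝ (Fin d ⊕ Fin d)) with hz
  have hn : ‖z‖ = 1 := by
    have := ω.2
    rwa [mem_sphere_zero_iff_norm] at this
  have hsq := proj_norm_sq z
  rw [hn] at hsq
  norm_num at hsq
  have h0L := norm_nonneg (projL z)
  have h0R := norm_nonneg (projR z)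
  have hL : ‖projL z‖ ≤ 1 := by nlinarith
  have hR : ‖projR z‖ ≤ 1 := by nlinarith
  have hip : |⟪projL z, projR z⟫| ≤ ‖projL z‖ * ‖projR z‖ := abs_real_inner_le_norm _ _
  have hhalf : ‖projL z‖ * ‖projR z‖ ≤ 1/2 := by nlinarith [sq_nonneg (‖projL z‖ - ‖projR z‖)]
  have habs : |⟪projL z, projR z⟫| ≤ 1/2 := hip.trans hhalf
  rw [abs_le] at habs
  exact ⟨hL, hR, by linarith [habs.1], by constructor <;> [linarith [habs.1]; linarith [habs.2]]⟩

/-- modified ternary gain/loss decomposition: for any `k > 2` there is a constant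
`C_k > 1`, depending only on `k`, such that whenever `d ≥ 2`, `θ ≥ 0`,
`b₃(x,y) = |x|^θ φ(y)` with `φ ≥ 0` essentially bounded and finite cutoff `‖b₃‖`, and
`λ ∈ [0, ‖b₃‖]` satisfies the ternary Povzner-type averaging bound of order `k`, the quantity
`K(v,v₁,v₂) = ∫_{S^{2d−1}} b₃(û·ω, ω₁·ω₂)(⟨v*⟩^k + ⟨v₁*⟩^k + ⟨v₂*⟩^k − ⟨v⟩^k − ⟨v₁⟩^k − ⟨v₂⟩^k) dω`
decomposes as `K = G̃ − L̃` with
`0 ≤ G̃ ≤ λ C_k (⟨v⟩⟨v₁⟩ + ⟨v⟩⟨v₂⟩ + ⟨v₁⟩⟨v₂⟩)(⟨v⟩^{k−2} + ⟨v₁⟩^{k−2} + ⟨v₂⟩^{k−2})` and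
`L̃ ≥ (‖b₃‖ − λ)(⟨v⟩^k + ⟨v₁⟩^k + ⟨v₂⟩^k)` for all triples with `u = (v₁−v, v₂−v) ≠ 0`,
where `û = u/|u|`. -/
theorem ternary_modified_decomposition (k : ℝ) (hk : 2 < k) :
    ∃ Ck : ℝ, 1 < Ck ∧
      ∀ (d : ℕ), 2 ≤ d →
      ∀ θ : ℝ, 0 ≤ θ →
      ∀ φ : ℝ → ℝ, Measurable φ →
        (∀ y ∈ Set.Icc (-(1 : ℝ) / 2) (1 / 2), 0 ≤ φ y) →
        MemLp φ ⊤ (volume.restrict (Set.Icc (-(1 : ℝ) / 2) (1 / 2))) →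
      ∀ b₃ : ℝ → ℝ → ℝ, (∀ x y, b₃ x y = |x| ^ θ * φ y) →
      ∀ normb₃ : ℝ,
        (∀ e : EuclideanSpace ℝ (Fin d ⊕ Fin d), ‖e‖ = 1 →
          (∫ ω : Metric.sphere (0 : EuclideanSpace ℝ (Fin d ⊕ Fin d)) 1,
              b₃ ⟪e, (ω : EuclideanSpace ℝ (Fin d ⊕ Fin d))⟫
                ⟪projL (ω : EuclideanSpace ℝ (Fin d ⊕ Fin d)),
                  projR (ω : EuclideanSpace ℝ (Fin d ⊕ Fin d))⟫ ∂(sphereMeasure2 d)) = normb₃) →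
        (∀ e : EuclideanSpace ℝ (Fin d ⊕ Fin d), ‖e‖ = 1 →
          Integrable (fun ω : Metric.sphere (0 : EuclideanSpace ℝ (Fin d ⊕ Fin d)) 1 =>
            b₃ ⟪e, (ω : EuclideanSpace ℝ (Fin d ⊕ Fin d))⟫
              ⟪projL (ω : EuclideanSpace ℝ (Fin d ⊕ Fin d)),
                projR (ω : EuclideanSpace ℝ (Fin d ⊕ Fin d))⟫) (sphereMeasure2 d)) →
      ∀ lam : ℝ, lam ∈ Set.Icc 0 normb₃ →
        (∀ v v₁ v₂ : EuclideanSpace ℝ (Fin d), pairE (v₁ - v) (v₂ - v) ≠ 0 →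
          (∫ ω : Metric.sphere (0 : EuclideanSpace ℝ (Fin d ⊕ Fin d)) 1,
              b₃ ⟪‖pairE (v₁ - v) (v₂ - v)‖⁻¹ • pairE (v₁ - v) (v₂ - v),
                  (ω : EuclideanSpace ℝ (Fin d ⊕ Fin d))⟫
                ⟪projL (ω : EuclideanSpace ℝ (Fin d ⊕ Fin d)),
                  projR (ω : EuclideanSpace ℝ (Fin d ⊕ Fin d))⟫ *
                (jap (vStar v v₁ v₂ (projL (ω : EuclideanSpace ℝ (Fin d ⊕ Fin d)))
                    (projR (ω : EuclideanSpace ℝ (Fin d ⊕ Fin d)))) ^ k +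
                  jap (v1Star v v₁ v₂ (projL (ω : EuclideanSpace ℝ (Fin d ⊕ Fin d)))
                    (projR (ω : EuclideanSpace ℝ (Fin d ⊕ Fin d)))) ^ k +
                  jap (v2Star v v₁ v₂ (projL (ω : EuclideanSpace ℝ (Fin d ⊕ Fin d)))
                    (projR (ω : EuclideanSpace ℝ (Fin d ⊕ Fin d)))) ^ k)
            ∂(sphereMeasure2 d)) ≤
            lam * (jap v ^ 2 + jap v₁ ^ 2 + jap v₂ ^ 2) ^ (k / 2)) →
      ∃ G L : EuclideanSpace ℝ (Fin d) → EuclideanSpace ℝ (Fin d) →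
          EuclideanSpace ℝ (Fin d) → ℝ,
        ∀ v v₁ v₂ : EuclideanSpace ℝ (Fin d), pairE (v₁ - v) (v₂ - v) ≠ 0 →
          ((∫ ω : Metric.sphere (0 : EuclideanSpace ℝ (Fin d ⊕ Fin d)) 1,
              b₃ ⟪‖pairE (v₁ - v) (v₂ - v)‖⁻¹ • pairE (v₁ - v) (v₂ - v),
                  (ω : EuclideanSpace ℝ (Fin d ⊕ Fin d))⟫
                ⟪projL (ω : EuclideanSpace ℝ (Fin d ⊕ Fin d)),
                  projR (ω : EuclideanSpace ℝ (Fin d ⊕ Fin d))⟫ *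
                (jap (vStar v v₁ v₂ (projL (ω : EuclideanSpace ℝ (Fin d ⊕ Fin d)))
                    (projR (ω : EuclideanSpace ℝ (Fin d ⊕ Fin d)))) ^ k +
                  jap (v1Star v v₁ v₂ (projL (ω : EuclideanSpace ℝ (Fin d ⊕ Fin d)))
                    (projR (ω : EuclideanSpace ℝ (Fin d ⊕ Fin d)))) ^ k +
                  jap (v2Star v v₁ v₂ (projL (ω : EuclideanSpace ℝ (Fin d ⊕ Fin d)))
                    (projR (ω : EuclideanSpace ℝ (Fin d ⊕ Fin d)))) ^ k -
                  jap v ^ k - jap v₁ ^ k - jap v₂ ^ k)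
            ∂(sphereMeasure2 d)) = G v v₁ v₂ - L v v₁ v₂) ∧
          0 ≤ G v v₁ v₂ ∧
          G v v₁ v₂ ≤ lam * Ck * (jap v * jap v₁ + jap v * jap v₂ + jap v₁ * jap v₂) *
            (jap v ^ (k - 2) + jap v₁ ^ (k - 2) + jap v₂ ^ (k - 2)) ∧
          (normb₃ - lam) * (jap v ^ k + jap v₁ ^ k + jap v₂ ^ k) ≤ L v v₁ v₂ := by

  have hCk0 : (0:ℝ) < 2 ^ (k/2) := Real.rpow_pos_of_pos (by norm_num) _
  refine ⟨(1 + 2^(k/2))^2, by nlinarith, ?_⟩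
  intro d hd θ hθ φ hφm hφ0 hφbd b₃ hb₃ normb₃ hnormval hintB lam hlam hpov
  classical
  refine ⟨fun v v₁ v₂ => max 0
      ((∫ ω : Metric.sphere (0 : EuclideanSpace ℝ (Fin d ⊕ Fin d)) 1,
          b₃ ⟪‖pairE (v₁ - v) (v₂ - v)‖⁻¹ • pairE (v₁ - v) (v₂ - v),
              (ω : EuclideanSpace ℝ (Fin d ⊕ Fin d))⟫
            ⟪projL (ω : EuclideanSpace ℝ (Fin d ⊕ Fin d)),
              projR (ω : EuclideanSpace ℝ (Fin d ⊕ Fin d))⟫ *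
            (jap (vStar v v₁ v₂ (projL (ω : EuclideanSpace ℝ (Fin d ⊕ Fin d)))
                (projR (ω : EuclideanSpace ℝ (Fin d ⊕ Fin d)))) ^ k +
              jap (v1Star v v₁ v₂ (projL (ω : EuclideanSpace ℝ (Fin d ⊕ Fin d)))
                (projR (ω : EuclideanSpace ℝ (Fin d ⊕ Fin d)))) ^ k +
              jap (v2Star v v₁ v₂ (projL (ω : EuclideanSpace ℝ (Fin d ⊕ Fin d)))
                (projR (ω : EuclideanSpace ℝ (Fin d ⊕ Fin d)))) ^ k)
        ∂(sphereMeasure2 d)) - lam * (jap v ^ k + jap v₁ ^ k + jap v₂ ^ k)),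
    fun v v₁ v₂ => max 0
      ((∫ ω : Metric.sphere (0 : EuclideanSpace ℝ (Fin d ⊕ Fin d)) 1,
          b₃ ⟪‖pairE (v₁ - v) (v₂ - v)‖⁻¹ • pairE (v₁ - v) (v₂ - v),
              (ω : EuclideanSpace ℝ (Fin d ⊕ Fin d))⟫
            ⟪projL (ω : EuclideanSpace ℝ (Fin d ⊕ Fin d)),
              projR (ω : EuclideanSpace ℝ (Fin d ⊕ Fin d))⟫ *
            (jap (vStar v v₁ v₂ (projL (ω : EuclideanSpace ℝ (Fin d ⊕ Fin d)))
                (projR (ω : EuclideanSpace ℝ (Fin d ⊕ Fin d)))) ^ k +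
              jap (v1Star v v₁ v₂ (projL (ω : EuclideanSpace ℝ (Fin d ⊕ Fin d)))
                (projR (ω : EuclideanSpace ℝ (Fin d ⊕ Fin d)))) ^ k +
              jap (v2Star v v₁ v₂ (projL (ω : EuclideanSpace ℝ (Fin d ⊕ Fin d)))
                (projR (ω : EuclideanSpace ℝ (Fin d ⊕ Fin d)))) ^ k)
        ∂(sphereMeasure2 d)) - lam * (jap v ^ k + jap v₁ ^ k + jap v₂ ^ k)) -
      (∫ ω : Metric.sphere (0 : EuclideanSpace ℝ (Fin d ⊕ Fin d)) 1,
          b₃ ⟪‖pairE (v₁ - v) (v₂ - v)‖⁻¹ • pairE (v₁ - v) (v₂ - v),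
              (ω : EuclideanSpace ℝ (Fin d ⊕ Fin d))⟫
            ⟪projL (ω : EuclideanSpace ℝ (Fin d ⊕ Fin d)),
              projR (ω : EuclideanSpace ℝ (Fin d ⊕ Fin d))⟫ *
            (jap (vStar v v₁ v₂ (projL (ω : EuclideanSpace ℝ (Fin d ⊕ Fin d)))
                (projR (ω : EuclideanSpace ℝ (Fin d ⊕ Fin d)))) ^ k +
              jap (v1Star v v₁ v₂ (projL (ω : EuclideanSpace ℝ (Fin d ⊕ Fin d)))
                (projR (ω : EuclideanSpace ℝ (Fin d ⊕ Fin d)))) ^ k +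
              jap (v2Star v v₁ v₂ (projL (ω : EuclideanSpace ℝ (Fin d ⊕ Fin d)))
                (projR (ω : EuclideanSpace ℝ (Fin d ⊕ Fin d)))) ^ k -
              jap v ^ k - jap v₁ ^ k - jap v₂ ^ k)
        ∂(sphereMeasure2 d)), ?_⟩
  intro v v₁ v₂ hu
  dsimp only
  set μ := sphereMeasure2 d with hμ
  set e : EuclideanSpace ℝ (Fin d ⊕ Fin d) :=
    ‖pairE (v₁ - v) (v₂ - v)‖⁻¹ • pairE (v₁ - v) (v₂ - v) with he_def
  have he : ‖e‖ = 1 := norm_smul_inv_norm (𝕜 := ℝ) hu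
  set B : Metric.sphere (0 : EuclideanSpace ℝ (Fin d ⊕ Fin d)) 1 → ℝ := fun ω =>
    b₃ ⟪e, (ω : EuclideanSpace ℝ (Fin d ⊕ Fin d))⟫
      ⟪projL (ω : EuclideanSpace ℝ (Fin d ⊕ Fin d)),
        projR (ω : EuclideanSpace ℝ (Fin d ⊕ Fin d))⟫ with hB_def
  set g : Metric.sphere (0 : EuclideanSpace ℝ (Fin d ⊕ Fin d)) 1 → ℝ := fun ω =>
    jap (vStar v v₁ v₂ (projL (ω : EuclideanSpace ℝ (Fin d ⊕ Fin d)))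
        (projR (ω : EuclideanSpace ℝ (Fin d ⊕ Fin d)))) ^ k +
      jap (v1Star v v₁ v₂ (projL (ω : EuclideanSpace ℝ (Fin d ⊕ Fin d)))
        (projR (ω : EuclideanSpace ℝ (Fin d ⊕ Fin d)))) ^ k +
      jap (v2Star v v₁ v₂ (projL (ω : EuclideanSpace ℝ (Fin d ⊕ Fin d)))
        (projR (ω : EuclideanSpace ℝ (Fin d ⊕ Fin d)))) ^ k with hg_def
  show (∫ ω, B ω * (g ω - jap v ^ k - jap v₁ ^ k - jap v₂ ^ k) ∂μ) =
      (max 0 ((∫ ω, B ω * g ω ∂μ) - lam * (jap v ^ k + jap v₁ ^ k + jap v₂ ^ k))) -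
        ((max 0 ((∫ ω, B ω * g ω ∂μ) - lam * (jap v ^ k + jap v₁ ^ k + jap v₂ ^ k))) -
          (∫ ω, B ω * (g ω - jap v ^ k - jap v₁ ^ k - jap v₂ ^ k) ∂μ)) ∧
    0 ≤ max 0 ((∫ ω, B ω * g ω ∂μ) - lam * (jap v ^ k + jap v₁ ^ k + jap v₂ ^ k)) ∧
    max 0 ((∫ ω, B ω * g ω ∂μ) - lam * (jap v ^ k + jap v₁ ^ k + jap v₂ ^ k)) ≤
      lam * (1 + 2 ^ (k / 2)) ^ 2 * (jap v * jap v₁ + jap v * jap v₂ + jap v₁ * jap v₂) *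
        (jap v ^ (k - 2) + jap v₁ ^ (k - 2) + jap v₂ ^ (k - 2)) ∧
    (normb₃ - lam) * (jap v ^ k + jap v₁ ^ k + jap v₂ ^ k) ≤
      (max 0 ((∫ ω, B ω * g ω ∂μ) - lam * (jap v ^ k + jap v₁ ^ k + jap v₂ ^ k))) -
        (∫ ω, B ω * (g ω - jap v ^ k - jap v₁ ^ k - jap v₂ ^ k) ∂μ)
  -- basic facts
  have hk0 : (0:ℝ) ≤ k := by linarith
  have hB_int : Integrable B μ := by rw [hB_def]; exact hintB e he
  have hB_val : (∫ ω, B ω ∂μ) = normb₃ := by simp only [hB_def]; exact hnormval e he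
  -- continuity of the projections on the sphere
  have hc1 : Continuous fun ω : Metric.sphere (0 : EuclideanSpace ℝ (Fin d ⊕ Fin d)) 1 =>
      projL (ω : EuclideanSpace ℝ (Fin d ⊕ Fin d)) :=
    continuous_projL.comp continuous_subtype_val
  have hc2 : Continuous fun ω : Metric.sphere (0 : EuclideanSpace ℝ (Fin d ⊕ Fin d)) 1 =>
      projR (ω : EuclideanSpace ℝ (Fin d ⊕ Fin d)) :=
    continuous_projR.comp continuous_subtype_val
  have hctc : Continuous fun ω : Metric.sphere (0 : EuclideanSpace ℝ (Fin d ⊕ Fin d)) 1 =>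
      tCoef v v₁ v₂ (projL (ω : EuclideanSpace ℝ (Fin d ⊕ Fin d)))
        (projR (ω : EuclideanSpace ℝ (Fin d ⊕ Fin d))) := by
    unfold tCoef
    exact ((continuous_const.inner hc1).add (continuous_const.inner hc2)).div
      (continuous_const.add (hc1.inner hc2))
      (fun ω => by have := (sphere_facts ω).2.2.1; intro h; rw [h] at this; linarith)
  have hg_cont : Continuous g := by
    rw [hg_def]
    have hv0 : Continuous fun ω : Metric.sphere (0 : EuclideanSpace ℝ (Fin d ⊕ Fin d)) 1 =>
        vStar v v₁ v₂ (projL (ω : EuclideanSpace ℝ (Fin d ⊕ Fin d)))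
          (projR (ω : EuclideanSpace ℝ (Fin d ⊕ Fin d))) := by
      unfold vStar
      exact continuous_const.add (hctc.smul (hc1.add hc2))
    have hv1 : Continuous fun ω : Metric.sphere (0 : EuclideanSpace ℝ (Fin d ⊕ Fin d)) 1 =>
        v1Star v v₁ v₂ (projL (ω : EuclideanSpace ℝ (Fin d ⊕ Fin d)))
          (projR (ω : EuclideanSpace ℝ (Fin d ⊕ Fin d))) := by
      unfold v1Star
      exact continuous_const.sub (hctc.smul hc1)
    have hv2 : Continuous fun ω : Metric.sphere (0 : EuclideanSpace ℝ (Fin d ⊕ Fin d)) 1 =>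
        v2Star v v₁ v₂ (projL (ω : EuclideanSpace ℝ (Fin d ⊕ Fin d)))
          (projR (ω : EuclideanSpace ℝ (Fin d ⊕ Fin d))) := by
      unfold v2Star
      exact continuous_const.sub (hctc.smul hc2)
    exact (((continuous_jap.comp hv0).rpow_const (fun _ => Or.inr hk0)).add
      ((continuous_jap.comp hv1).rpow_const (fun _ => Or.inr hk0))).add
      ((continuous_jap.comp hv2).rpow_const (fun _ => Or.inr hk0))
  -- bound for g
  set D : ℝ := ‖v₁ - v‖ + ‖v₂ - v‖ with hD_def
  have hD0 : 0 ≤ D := by positivity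
  set R : ℝ := ‖v‖ + ‖v₁‖ + ‖v₂‖ + 4 * D with hR_def
  have hcoef : ∀ ω : Metric.sphere (0 : EuclideanSpace ℝ (Fin d ⊕ Fin d)) 1,
      |tCoef v v₁ v₂ (projL (ω : EuclideanSpace ℝ (Fin d ⊕ Fin d)))
        (projR (ω : EuclideanSpace ℝ (Fin d ⊕ Fin d)))| ≤ 2 * D := by
    intro ω
    obtain ⟨hL, hR', hden, -⟩ := sphere_facts ω
    have hnum : |⟪v₁ - v, projL (ω : EuclideanSpace ℝ (Fin d ⊕ Fin d))⟫ +
        ⟪v₂ - v, projR (ω : EuclideanSpace ℝ (Fin d ⊕ Fin d))⟫| ≤ D := by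
      have h1 := abs_real_inner_le_norm (v₁ - v) (projL (ω : EuclideanSpace ℝ (Fin d ⊕ Fin d)))
      have h2 := abs_real_inner_le_norm (v₂ - v) (projR (ω : EuclideanSpace ℝ (Fin d ⊕ Fin d)))
      have h3 := abs_add_le (⟪v₁ - v, projL (ω : EuclideanSpace ℝ (Fin d ⊕ Fin d))⟫)
        (⟪v₂ - v, projR (ω : EuclideanSpace ℝ (Fin d ⊕ Fin d))⟫)
      have h4 := norm_nonneg (v₁ - v)
      have h5 := norm_nonneg (v₂ - v)
      rw [hD_def]
      nlinarith [norm_nonneg (projL (ω : EuclideanSpace ℝ (Fin d ⊕ Fin d))),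
        norm_nonneg (projR (ω : EuclideanSpace ℝ (Fin d ⊕ Fin d)))]
    rw [tCoef, abs_div, abs_of_pos (by linarith :
      (0:ℝ) < 1 + ⟪projL (ω : EuclideanSpace ℝ (Fin d ⊕ Fin d)),
        projR (ω : EuclideanSpace ℝ (Fin d ⊕ Fin d))⟫)]
    rw [div_le_iff₀ (by linarith)]
    nlinarith [abs_nonneg (⟪v₁ - v, projL (ω : EuclideanSpace ℝ (Fin d ⊕ Fin d))⟫ +
      ⟪v₂ - v, projR (ω : EuclideanSpace ℝ (Fin d ⊕ Fin d))⟫)]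
  have hg_bdd : ∀ ω, ‖g ω‖ ≤ 3 * Real.sqrt (1 + R ^ 2) ^ k := by
    intro ω
    obtain ⟨hL, hR', hden, -⟩ := sphere_facts ω
    have hc := hcoef ω
    set c := tCoef v v₁ v₂ (projL (ω : EuclideanSpace ℝ (Fin d ⊕ Fin d)))
      (projR (ω : EuclideanSpace ℝ (Fin d ⊕ Fin d))) with hc_def
    have hb0 : ‖vStar v v₁ v₂ (projL (ω : EuclideanSpace ℝ (Fin d ⊕ Fin d)))
        (projR (ω : EuclideanSpace ℝ (Fin d ⊕ Fin d)))‖ ≤ R := by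
      rw [vStar]
      have h1 := norm_add_le v (c • (projL (ω : EuclideanSpace ℝ (Fin d ⊕ Fin d)) +
        projR (ω : EuclideanSpace ℝ (Fin d ⊕ Fin d))))
      rw [norm_smul, Real.norm_eq_abs] at h1
      have h2 := norm_add_le (projL (ω : EuclideanSpace ℝ (Fin d ⊕ Fin d)))
        (projR (ω : EuclideanSpace ℝ (Fin d ⊕ Fin d)))
      have h3 : |c| * ‖projL (ω : EuclideanSpace ℝ (Fin d ⊕ Fin d)) +
          projR (ω : EuclideanSpace ℝ (Fin d ⊕ Fin d))‖ ≤ 2 * D * 2 := by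
        apply mul_le_mul hc (by linarith) (norm_nonneg _) (by linarith)
      rw [hR_def]
      have := norm_nonneg v₁
      have := norm_nonneg v₂
      linarith
    have hb1 : ‖v1Star v v₁ v₂ (projL (ω : EuclideanSpace ℝ (Fin d ⊕ Fin d)))
        (projR (ω : EuclideanSpace ℝ (Fin d ⊕ Fin d)))‖ ≤ R := by
      rw [v1Star]
      have h1 := norm_sub_le v₁ (c • projL (ω : EuclideanSpace ℝ (Fin d ⊕ Fin d)))
      rw [norm_smul, Real.norm_eq_abs] at h1
      have h3 : |c| * ‖projL (ω : EuclideanSpace ℝ (Fin d ⊕ Fin d))‖ ≤ 2 * D * 1 := by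
        apply mul_le_mul hc hL (norm_nonneg _) (by linarith)
      rw [hR_def]
      have := norm_nonneg v
      have := norm_nonneg v₂
      linarith
    have hb2 : ‖v2Star v v₁ v₂ (projL (ω : EuclideanSpace ℝ (Fin d ⊕ Fin d)))
        (projR (ω : EuclideanSpace ℝ (Fin d ⊕ Fin d)))‖ ≤ R := by
      rw [v2Star]
      have h1 := norm_sub_le v₂ (c • projR (ω : EuclideanSpace ℝ (Fin d ⊕ Fin d)))
      rw [norm_smul, Real.norm_eq_abs] at h1
      have h3 : |c| * ‖projR (ω : EuclideanSpace ℝ (Fin d ⊕ Fin d))‖ ≤ 2 * D * 1 := by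
        apply mul_le_mul hc hR' (norm_nonneg _) (by linarith)
      rw [hR_def]
      have := norm_nonneg v
      have := norm_nonneg v₁
      linarith
    have key : ∀ w : EuclideanSpace ℝ (Fin d), ‖w‖ ≤ R →
        jap w ^ k ≤ Real.sqrt (1 + R ^ 2) ^ k := fun w hw =>
      Real.rpow_le_rpow (jap_nonneg w) (jap_le hw) hk0
    have k0 := key _ hb0
    have k1 := key _ hb1
    have k2 := key _ hb2
    have hgnn : 0 ≤ g ω := by
      rw [hg_def]
      have := Real.rpow_nonneg (jap_nonneg (vStar v v₁ v₂
        (projL (ω : EuclideanSpace ℝ (Fin d ⊕ Fin d)))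
        (projR (ω : EuclideanSpace ℝ (Fin d ⊕ Fin d))))) k
      have := Real.rpow_nonneg (jap_nonneg (v1Star v v₁ v₂
        (projL (ω : EuclideanSpace ℝ (Fin d ⊕ Fin d)))
        (projR (ω : EuclideanSpace ℝ (Fin d ⊕ Fin d))))) k
      have := Real.rpow_nonneg (jap_nonneg (v2Star v v₁ v₂
        (projL (ω : EuclideanSpace ℝ (Fin d ⊕ Fin d)))
        (projR (ω : EuclideanSpace ℝ (Fin d ⊕ Fin d))))) k
      dsimp only
      linarith
    rw [Real.norm_eq_abs, abs_of_nonneg hgnn, hg_def]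
    dsimp only
    linarith
  have hg_meas : AEStronglyMeasurable g μ := hg_cont.aestronglyMeasurable
  have h_int_Bg : Integrable (fun ω => B ω * g ω) μ := by
    have h := hB_int.bdd_mul (c := 3 * Real.sqrt (1 + R ^ 2) ^ k) hg_meas (Filter.Eventually.of_forall hg_bdd)
    have heq : (fun ω => g ω * B ω) = fun ω => B ω * g ω := funext fun ω => mul_comm _ _
    rwa [heq] at h
  have hKeq : (∫ ω, B ω * (g ω - jap v ^ k - jap v₁ ^ k - jap v₂ ^ k) ∂μ)
      = (∫ ω, B ω * g ω ∂μ) - normb₃ * (jap v ^ k + jap v₁ ^ k + jap v₂ ^ k) := by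
    have h2 : Integrable (fun ω => B ω * (jap v ^ k + jap v₁ ^ k + jap v₂ ^ k)) μ :=
      hB_int.mul_const _
    calc (∫ ω, B ω * (g ω - jap v ^ k - jap v₁ ^ k - jap v₂ ^ k) ∂μ)
        = ∫ ω, (B ω * g ω - B ω * (jap v ^ k + jap v₁ ^ k + jap v₂ ^ k)) ∂μ := by
          congr 1; funext ω; ring
      _ = (∫ ω, B ω * g ω ∂μ) - ∫ ω, B ω * (jap v ^ k + jap v₁ ^ k + jap v₂ ^ k) ∂μ :=
          integral_sub h_int_Bg h2
      _ = (∫ ω, B ω * g ω ∂μ) - normb₃ * (jap v ^ k + jap v₁ ^ k + jap v₂ ^ k) := by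
          rw [integral_mul_const, hB_val, mul_comm]
  -- Povzner estimate
  have hja := one_le_jap v
  have hjb := one_le_jap v₁
  have hjc := one_le_jap v₂
  have hpovz := povzner k hk (jap v) (jap v₁) (jap v₂) hja hjb hjc
  have hpov' : (∫ ω, B ω * g ω ∂μ) ≤
      lam * (jap v ^ 2 + jap v₁ ^ 2 + jap v₂ ^ 2) ^ (k / 2) := hpov v v₁ v₂ hu
  have hlam0 : 0 ≤ lam := hlam.1
  have hmul : lam * (jap v ^ 2 + jap v₁ ^ 2 + jap v₂ ^ 2) ^ (k / 2) ≤
      lam * ((jap v ^ k + jap v₁ ^ k + jap v₂ ^ k) +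
        (1 + 2 ^ (k / 2)) ^ 2 * ((jap v * jap v₁ + jap v * jap v₂ + jap v₁ * jap v₂) *
          (jap v ^ (k - 2) + jap v₁ ^ (k - 2) + jap v₂ ^ (k - 2)))) :=
    mul_le_mul_of_nonneg_left hpovz hlam0
  have hak2 : (0:ℝ) ≤ jap v ^ (k-2) := Real.rpow_nonneg (jap_nonneg v) _
  have hbk2 : (0:ℝ) ≤ jap v₁ ^ (k-2) := Real.rpow_nonneg (jap_nonneg v₁) _
  have hck2 : (0:ℝ) ≤ jap v₂ ^ (k-2) := Real.rpow_nonneg (jap_nonneg v₂) _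
  have hak : (0:ℝ) ≤ jap v ^ k := Real.rpow_nonneg (jap_nonneg v) _
  have hbk : (0:ℝ) ≤ jap v₁ ^ k := Real.rpow_nonneg (jap_nonneg v₁) _
  have hck : (0:ℝ) ≤ jap v₂ ^ k := Real.rpow_nonneg (jap_nonneg v₂) _
  have hQ0 : (0:ℝ) ≤ jap v * jap v₁ + jap v * jap v₂ + jap v₁ * jap v₂ := by nlinarith
  have hT0 : (0:ℝ) ≤ jap v ^ (k-2) + jap v₁ ^ (k-2) + jap v₂ ^ (k-2) := by linarith
  refine ⟨by ring, le_max_left _ _, ?_, ?_⟩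
  · apply max_le
    · have h1 : (0:ℝ) ≤ (1 + 2 ^ (k / 2)) ^ 2 := by positivity
      nlinarith [mul_nonneg (mul_nonneg (mul_nonneg hlam0 h1) hQ0) hT0]
    · nlinarith [hpov', hmul]
  · have h1 := le_max_right 0 ((∫ ω, B ω * g ω ∂μ) -
      lam * (jap v ^ k + jap v₁ ^ k + jap v₂ ^ k))
    nlinarith [hKeq, h1]
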